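/- arXiv:2312.15079 — 3 statements merged into one kernel-verified Lean document; each statement's English description precedes it below -/
import Mathlib

section
/- If G is an n×n diagonal matrix with i.i.d. Rademacher diagonal entries and A, B are fixed symmetric n×n matrices, then the (i,j)-entry of E[G A G B G A G] equals (A_{ii}A_{jj} + A_{ij}²)B_{ij} for i ≠ j, and equals ∑_{k=1}^n A_{ik}² B_{kk} for i = j. -/
open MeasureTheory ProbabilityTheory Matrix

lemma aux_ite_split {n : ℕ} (A B : Matrix (Fin n) (Fin n) ℝ) {i j : Fin n} (hij : i ≠ j)
    (k l : Fin n) :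
    A i k * B k l * A l j * (if (k = i ∧ l = j) ∨ (k = j ∧ l = i) then 1 else 0)
    = (if l = j then (if k = i then A i k * B k l * A l j else 0) else 0)
      + (if l = i then (if k = j then A i k * B k l * A l j else 0) else 0) := by
  by_cases h1 : k = i <;> by_cases h2 : l = j <;> by_cases h3 : k = j <;>
    by_cases h4 : l = i <;> simp_all

/-- If `G` is a random `n × n` diagonal matrix with i.i.d. Rademacher diagonal entries and
`A, B` are fixed symmetric matrices, then the `(i,j)` entry of `E[G A G B G A G]` equals
`(A i i * A j j + (A i j)^2) * B i j` for `i ≠ j`, and `∑ k, (A i k)^2 * B k k` for `i = j`. -/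
theorem expectation_GAGBGAG_entry
    {Ω : Type*} [MeasurableSpace Ω] (μ : Measure Ω) [IsProbabilityMeasure μ]
    {n : ℕ} (g : Fin n → Ω → ℝ) (hmeas : ∀ i, Measurable (g i))
    (hindep : iIndepFun g μ)
    (hlaw₁ : ∀ i, μ {ω | g i ω = 1} = 1 / 2)
    (hlaw₂ : ∀ i, μ {ω | g i ω = -1} = 1 / 2)
    (A B : Matrix (Fin n) (Fin n) ℝ) (hA : A.IsSymm) (hB : B.IsSymm) :
    ∀ i j, (∫ ω, (Matrix.diagonal (fun k => g k ω) * A * Matrix.diagonal (fun k => g k ω) * B *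
          Matrix.diagonal (fun k => g k ω) * A * Matrix.diagonal (fun k => g k ω)) i j ∂μ)
      = if i = j then ∑ k, (A i k) ^ 2 * B k k
        else (A i i * A j j + (A i j) ^ 2) * B i j := by
  -- measurability of the level sets
  have hS1 : ∀ a, MeasurableSet {ω | g a ω = 1} := fun a =>
    (hmeas a) (measurableSet_singleton 1)
  have hS2 : ∀ a, MeasurableSet {ω | g a ω = -1} := fun a =>
    (hmeas a) (measurableSet_singleton (-1))
  -- almost every ω, g a ω = ±1
  have hae : ∀ a, ∀ᵐ ω ∂μ, g a ω = 1 ∨ g a ω = -1 := by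
    intro a
    have hd : Disjoint {ω | g a ω = 1} {ω | g a ω = -1} := by
      rw [Set.disjoint_left]
      intro ω h1 h2
      simp only [Set.mem_setOf_eq] at h1 h2
      rw [h1] at h2; norm_num at h2
    have hu : μ ({ω | g a ω = 1} ∪ {ω | g a ω = -1}) = 1 := by
      rw [measure_union hd (hS2 a), hlaw₁, hlaw₂, ENNReal.div_add_div_same,
        one_add_one_eq_two, ENNReal.div_self (by norm_num) (by norm_num)]
    have hc : μ ({ω | g a ω = 1} ∪ {ω | g a ω = -1})ᶜ = 0 := by
      rw [measure_compl ((hS1 a).union (hS2 a)) (measure_ne_top μ _), hu, measure_univ,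
        tsub_self]
    rw [ae_iff]
    have hset : {ω | ¬(g a ω = 1 ∨ g a ω = -1)}
        = ({ω | g a ω = 1} ∪ {ω | g a ω = -1})ᶜ := by
      ext ω; simp [not_or]
    rw [hset]; exact hc
  -- boundedness and integrability
  have hb : ∀ a, ∀ᵐ ω ∂μ, ‖g a ω‖ ≤ 1 := by
    intro a
    filter_upwards [hae a] with ω h
    rcases h with h | h <;> rw [h] <;> norm_num
  have hInt : ∀ a, Integrable (g a) μ := fun a =>
    Integrable.mono' (integrable_const 1) (hmeas a).aestronglyMeasurable (hb a)
  have hIntmul : ∀ a b, Integrable (fun ω => g a ω * g b ω) μ := by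
    intro a b
    refine Integrable.mono' (integrable_const 1)
      ((hmeas a).mul (hmeas b)).aestronglyMeasurable ?_
    filter_upwards [hb a, hb b] with ω h1 h2
    calc ‖g a ω * g b ω‖ = ‖g a ω‖ * ‖g b ω‖ := norm_mul _ _
      _ ≤ 1 * 1 := mul_le_mul h1 h2 (norm_nonneg _) zero_le_one
      _ = 1 := one_mul 1
  have hInt4 : ∀ a b c d, Integrable (fun ω => (g a ω * g b ω) * (g c ω * g d ω)) μ := by
    intro a b c d
    refine Integrable.mono' (integrable_const 1)
      (((hmeas a).mul (hmeas b)).mul ((hmeas c).mul (hmeas d))).aestronglyMeasurable ?_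
    filter_upwards [hb a, hb b, hb c, hb d] with ω h1 h2 h3 h4
    calc ‖(g a ω * g b ω) * (g c ω * g d ω)‖
        = ‖g a ω‖ * ‖g b ω‖ * (‖g c ω‖ * ‖g d ω‖) := by rw [norm_mul, norm_mul, norm_mul]
      _ ≤ 1 * 1 * (1 * 1) := by gcongr
      _ = 1 := by norm_num
  -- first moment is zero
  have hE1 : ∀ a, ∫ ω, g a ω ∂μ = 0 := by
    intro a
    have heq : g a =ᵐ[μ] fun ω =>
        Set.indicator {ω | g a ω = 1} (fun _ => (1 : ℝ)) ω
          - Set.indicator {ω | g a ω = -1} (fun _ => (1 : ℝ)) ω := by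
      filter_upwards [hae a] with ω h
      rcases h with h | h
      · have h2 : ω ∉ {ω | g a ω = -1} := by
          simp only [Set.mem_setOf_eq]; rw [h]; norm_num
        simp [Set.indicator_of_mem (show ω ∈ {ω | g a ω = 1} from h),
          Set.indicator_of_notMem h2, h]
      · have h2 : ω ∉ {ω | g a ω = 1} := by
          simp only [Set.mem_setOf_eq]; rw [h]; norm_num
        simp [Set.indicator_of_mem (show ω ∈ {ω | g a ω = -1} from h),
          Set.indicator_of_notMem h2, h]
    rw [integral_congr_ae heq, integral_sub
      ((integrable_const (1 : ℝ)).indicator (hS1 a))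
      ((integrable_const (1 : ℝ)).indicator (hS2 a)),
      integral_indicator_const _ (hS1 a), integral_indicator_const _ (hS2 a),
      measureReal_def, measureReal_def, hlaw₁, hlaw₂, sub_self]
  -- squares are a.e. one
  have hsq : ∀ a, ∀ᵐ ω ∂μ, g a ω * g a ω = 1 := by
    intro a
    filter_upwards [hae a] with ω h
    rcases h with h | h <;> rw [h] <;> norm_num
  -- second mixed moment is zero
  have hE2 : ∀ a b, a ≠ b → ∫ ω, g a ω * g b ω ∂μ = 0 := by
    intro a b h
    have hind : IndepFun (g a) (g b) μ := hindep.indepFun h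
    have h2 : (∫ ω, g a ω * g b ω ∂μ) = (∫ ω, g a ω ∂μ) * ∫ ω, g b ω ∂μ :=
      hind.integral_fun_mul_eq_mul_integral (hInt a).1 (hInt b).1
    rw [h2, hE1 a, zero_mul]
  -- dropping a square under the integral
  have key : ∀ a (f : Ω → ℝ), ∫ ω, (g a ω * g a ω) * f ω ∂μ = ∫ ω, f ω ∂μ := by
    intro a f
    refine integral_congr_ae ?_
    filter_upwards [hsq a] with ω h
    rw [h, one_mul]
  have keysq : ∀ a b, ∫ ω, (g a ω * g a ω) * (g b ω * g b ω) ∂μ = 1 := by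
    intro a b
    rw [key a]
    have : ∫ ω, g b ω * g b ω ∂μ = ∫ (_ : Ω), (1 : ℝ) ∂μ := integral_congr_ae (hsq b)
    rw [this, integral_const, probReal_univ, one_smul]
  intro i j
  -- rewrite the matrix entry pointwise as a double sum
  have hrw : ∀ ω, (Matrix.diagonal (fun k => g k ω) * A * Matrix.diagonal (fun k => g k ω) * B *
          Matrix.diagonal (fun k => g k ω) * A * Matrix.diagonal (fun k => g k ω)) i j
      = ∑ k, ∑ l, A i k * B k l * A l j * ((g i ω * g k ω) * (g l ω * g j ω)) := by
    intro ω
    simp only [Matrix.mul_apply, Matrix.diagonal_apply, ite_mul, zero_mul, mul_ite, mul_zero,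
      Finset.sum_ite_eq, Finset.sum_ite_eq', Finset.mem_univ, if_true, Finset.sum_mul]
    rw [Finset.sum_comm]
    refine Finset.sum_congr rfl fun k _ => Finset.sum_congr rfl fun l _ => by ring
  have hsplit : (∫ ω, (Matrix.diagonal (fun k => g k ω) * A * Matrix.diagonal (fun k => g k ω) * B *
          Matrix.diagonal (fun k => g k ω) * A * Matrix.diagonal (fun k => g k ω)) i j ∂μ)
      = ∑ k, ∑ l, A i k * B k l * A l j *
          ∫ ω, (g i ω * g k ω) * (g l ω * g j ω) ∂μ := by
    rw [integral_congr_ae (Filter.Eventually.of_forall hrw)]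
    rw [integral_finset_sum _ fun k _ => integrable_finset_sum _ fun l _ =>
      (hInt4 i k l j).const_mul _]
    refine Finset.sum_congr rfl fun k _ => ?_
    rw [integral_finset_sum _ fun l _ => (hInt4 i k l j).const_mul _]
    exact Finset.sum_congr rfl fun l _ => integral_const_mul _ _
  rw [hsplit]
  by_cases hij : i = j
  · subst hij
    simp only [if_pos rfl]
    have hT : ∀ k l, ∫ ω, (g i ω * g k ω) * (g l ω * g i ω) ∂μ
        = if k = l then 1 else 0 := by
      intro k l
      have hcomm : (fun ω => (g i ω * g k ω) * (g l ω * g i ω))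
          = fun ω => (g i ω * g i ω) * (g k ω * g l ω) := by
        funext ω; ring
      by_cases hkl : k = l
      · subst hkl
        rw [if_pos rfl, show (∫ ω, (g i ω * g k ω) * (g k ω * g i ω) ∂μ)
            = ∫ ω, (g i ω * g i ω) * (g k ω * g k ω) ∂μ from congrArg _ hcomm, keysq]
      · rw [if_neg hkl, show (∫ ω, (g i ω * g k ω) * (g l ω * g i ω) ∂μ)
            = ∫ ω, (g i ω * g i ω) * (g k ω * g l ω) ∂μ from congrArg _ hcomm, key,
          hE2 k l hkl]
    calc ∑ k, ∑ l, A i k * B k l * A l i *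
          ∫ ω, (g i ω * g k ω) * (g l ω * g i ω) ∂μ
        = ∑ k, ∑ l, A i k * B k l * A l i * (if k = l then 1 else 0) := by
          refine Finset.sum_congr rfl fun k _ => Finset.sum_congr rfl fun l _ => ?_
          rw [hT]
      _ = ∑ k, A i k ^ 2 * B k k := by
          refine Finset.sum_congr rfl fun k _ => ?_
          rw [Finset.sum_eq_single k]
          · rw [if_pos rfl, mul_one, show A k i = A i k from hA.apply i k, sq]; ring
          · intro l _ hlk; rw [if_neg fun h => hlk h.symm, mul_zero]
          · intro h; exact absurd (Finset.mem_univ k) h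
  · rw [if_neg hij]
    have hT : ∀ k l, ∫ ω, (g i ω * g k ω) * (g l ω * g j ω) ∂μ
        = if (k = i ∧ l = j) ∨ (k = j ∧ l = i) then 1 else 0 := by
      intro k l
      have hre : ∀ (p : Ω → ℝ), (fun ω => (g i ω * g k ω) * (g l ω * g j ω)) = p →
          (∫ ω, (g i ω * g k ω) * (g l ω * g j ω) ∂μ) = ∫ ω, p ω ∂μ :=
        fun p hp => congrArg _ hp
      by_cases hk1 : k = i
      · subst hk1
        by_cases hl : l = j
        · subst hl
          rw [if_pos (Or.inl ⟨rfl, rfl⟩),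
            hre (fun ω => (g k ω * g k ω) * (g l ω * g l ω)) (by funext ω; ring), keysq]
        · rw [if_neg (by rintro (⟨-, h⟩ | ⟨h, -⟩); exact hl h; exact hij h),
            hre (fun ω => (g k ω * g k ω) * (g l ω * g j ω)) (by funext ω; ring), key,
            hE2 l j hl]
      · by_cases hk2 : k = j
        · subst hk2
          by_cases hl : l = i
          · subst hl
            rw [if_pos (Or.inr ⟨rfl, rfl⟩),
              hre (fun ω => (g l ω * g l ω) * (g k ω * g k ω)) (by funext ω; ring), keysq]
          · rw [if_neg (by rintro (⟨h, -⟩ | ⟨-, h⟩); exact hk1 h; exact hl h),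
              hre (fun ω => (g k ω * g k ω) * (g i ω * g l ω)) (by funext ω; ring), key,
              hE2 i l fun h => hl h.symm]
        · by_cases hl1 : l = i
          · subst hl1
            rw [if_neg (by rintro (⟨h, -⟩ | ⟨h, -⟩) <;> [exact hk1 h; exact hk2 h]),
              hre (fun ω => (g l ω * g l ω) * (g k ω * g j ω)) (by funext ω; ring), key,
              hE2 k j hk2]
          · by_cases hl2 : l = j
            · subst hl2
              rw [if_neg (by rintro (⟨h, -⟩ | ⟨h, -⟩) <;> [exact hk1 h; exact hk2 h]),
                hre (fun ω => (g l ω * g l ω) * (g i ω * g k ω)) (by funext ω; ring), key,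
                hE2 i k fun h => hk1 h.symm]
            · by_cases hkl : k = l
              · subst hkl
                rw [if_neg (by rintro (⟨h, -⟩ | ⟨h, -⟩) <;> [exact hk1 h; exact hk2 h]),
                  hre (fun ω => (g k ω * g k ω) * (g i ω * g j ω)) (by funext ω; ring), key,
                  hE2 i j hij]
              · rw [if_neg (by rintro (⟨h, -⟩ | ⟨h, -⟩) <;> [exact hk1 h; exact hk2 h])]
                have hind : IndepFun (g i * g k) (g l * g j) μ :=
                  hindep.indepFun_mul_mul hmeas i k l j (fun h => hl1 h.symm) hij hkl hk2
                have h2 : (∫ ω, (g i ω * g k ω) * (g l ω * g j ω) ∂μ)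
                    = (∫ ω, g i ω * g k ω ∂μ) * ∫ ω, g l ω * g j ω ∂μ :=
                  hind.integral_fun_mul_eq_mul_integral (hIntmul i k).1 (hIntmul l j).1
                rw [h2, hE2 i k fun h => hk1 h.symm, zero_mul]
    calc ∑ k, ∑ l, A i k * B k l * A l j *
          ∫ ω, (g i ω * g k ω) * (g l ω * g j ω) ∂μ
        = ∑ k, ∑ l, A i k * B k l * A l j *
            (if (k = i ∧ l = j) ∨ (k = j ∧ l = i) then 1 else 0) := by
          refine Finset.sum_congr rfl fun k _ => Finset.sum_congr rfl fun l _ => ?_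
          rw [hT]
      _ = (A i i * A j j + (A i j) ^ 2) * B i j := by
          simp only [aux_ite_split A B hij, Finset.sum_add_distrib,
            Finset.sum_ite_eq', Finset.mem_univ, if_true]
          rw [show B j i = B i j from hB.apply i j]
          ring
end

section
/- Let A be an n×n projection matrix of rank k, let B ∈ ℝ^{n×n} satisfy BBᵀ ⪯ c₀ I_n for some c₀ > 0, let ε have independent coordinates with mean zero, variance one, and finite fourth moments, and let G be an independent diagonal matrix with i.i.d. Rademacher entries. Then E[‖A G B ε‖⁴] ≤ c₀² k² + (2 + max_i E[ε_i⁴])·c₀² k. -/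
set_option linter.unusedSectionVars false
set_option maxHeartbeats 4000000

open MeasureTheory ProbabilityTheory Matrix

/-- The Euclidean norm of a vector in `ℝ^n`. -/
noncomputable def vecNorm {n : ℕ} (v : Fin n → ℝ) : ℝ :=
  Real.sqrt (∑ i, v i ^ 2)


/-- multiplicity of `r` among the four indices -/
def cnt {n : ℕ} (i j p q r : Fin n) : ℕ :=
  (if i = r then 1 else 0) + (if j = r then 1 else 0) + (if p = r then 1 else 0)
    + (if q = r then 1 else 0)

lemma cnt_le {n : ℕ} (i j p q r : Fin n) : cnt i j p q r ≤ 4 := by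
  unfold cnt; split_ifs <;> norm_num

/-- `m`-th moment -/
noncomputable def mom {n : ℕ} (ν : Fin n → Measure ℝ) (m : ℕ) (i : Fin n) : ℝ :=
  ∫ t, t ^ m ∂ν i

section StageA

variable {n : ℕ} (ν : Fin n → Measure ℝ) [∀ i, IsProbabilityMeasure (ν i)]

lemma mom0 (i : Fin n) : mom ν 0 i = 1 := by simp [mom]

lemma mom1 (hm1 : ∀ i, ∫ t, t ∂ν i = 0) (i : Fin n) : mom ν 1 i = 0 := by
  simpa [mom] using hm1 i

lemma mom2 (hm2 : ∀ i, ∫ t, t ^ 2 ∂ν i = 1) (i : Fin n) : mom ν 2 i = 1 := by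
  simpa [mom] using hm2 i

lemma pi_int (f : Fin n → ℝ → ℝ) :
    ∫ y, ∏ i, f i (y i) ∂Measure.pi ν = ∏ i, ∫ t, f i t ∂ν i :=
  MeasureTheory.integral_fintype_prod_eq_prod (μ := ν) f

lemma pi_integrable (f : Fin n → ℝ → ℝ) (hf : ∀ i, Integrable (f i) (ν i)) :
    Integrable (fun y => ∏ i, f i (y i)) (Measure.pi ν) :=
  MeasureTheory.Integrable.fintype_prod_dep (μ := ν) (f := f) hf

lemma intpow (hint : ∀ i, Integrable (fun t : ℝ => t ^ 4) (ν i)) (i : Fin n) (m : ℕ)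
    (hm : m ≤ 4) : Integrable (fun t : ℝ => t ^ m) (ν i) := by
  have hb : Integrable (fun t : ℝ => 1 + t ^ 4) (ν i) := (integrable_const 1).add (hint i)
  refine hb.mono' (measurable_id.pow_const m).aestronglyMeasurable (ae_of_all _ fun t => ?_)
  rcases le_or_gt (|t|) 1 with h | h
  · calc ‖t ^ m‖ = |t| ^ m := by rw [Real.norm_eq_abs, abs_pow]
    _ ≤ 1 := pow_le_one₀ (abs_nonneg t) h
    _ ≤ 1 + t ^ 4 := le_add_of_nonneg_right (by positivity)
  · calc ‖t ^ m‖ = |t| ^ m := by rw [Real.norm_eq_abs, abs_pow]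
    _ ≤ |t| ^ 4 := by gcongr; exact h.le
    _ = t ^ 4 := by rw [pow_abs, abs_of_nonneg (by positivity)]
    _ ≤ 1 + t ^ 4 := le_add_of_nonneg_left zero_le_one

lemma mono_eq (y : Fin n → ℝ) (i j p q : Fin n) :
    y i * y j * (y p * y q) = ∏ r, (y r) ^ (cnt i j p q r) := by
  simp only [cnt, pow_add, Finset.prod_mul_distrib, pow_ite, pow_one, pow_zero,
    Finset.prod_ite_eq, Finset.mem_univ, if_true]
  ring

lemma mono_integrable (hint : ∀ i, Integrable (fun t : ℝ => t ^ 4) (ν i)) (i j p q : Fin n) :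
    Integrable (fun y : Fin n → ℝ => y i * y j * (y p * y q)) (Measure.pi ν) := by
  have he : (fun y : Fin n → ℝ => y i * y j * (y p * y q))
      = fun y => ∏ r, (y r) ^ (cnt i j p q r) := funext fun y => mono_eq y i j p q
  rw [he]
  exact pi_integrable ν _ fun r => intpow ν hint r _ (cnt_le i j p q r)

lemma mono_integral (i j p q : Fin n) :
    ∫ y, y i * y j * (y p * y q) ∂Measure.pi ν = ∏ r, mom ν (cnt i j p q r) r := by
  have he : (fun y : Fin n → ℝ => y i * y j * (y p * y q))
      = fun y => ∏ r, (y r) ^ (cnt i j p q r) := funext fun y => mono_eq y i j p q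
  rw [he]
  exact pi_int ν (fun r t => t ^ cnt i j p q r)


lemma prod_mom_eval (hm1 : ∀ i, ∫ t, t ∂ν i = 0) (hm2 : ∀ i, ∫ t, t ^ 2 ∂ν i = 1)
    (i j p q : Fin n) :
    ∏ r, mom ν (cnt i j p q r) r =
      (if i = j ∧ p = q then 1 else 0) + (if i = p ∧ j = q then 1 else 0)
      + (if i = q ∧ j = p then 1 else 0)
      + (if i = j ∧ i = p ∧ i = q then mom ν 4 i - 3 else 0) := by
  have hz : ∀ w : Fin n, cnt i j p q w = 1 → ∏ r, mom ν (cnt i j p q r) r = 0 := by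
    intro w hw
    exact Finset.prod_eq_zero (Finset.mem_univ w) (by rw [hw]; exact mom1 ν hm1 w)
  by_cases hij : i = j
  · by_cases hpq : p = q
    · by_cases hip : i = p
      · -- all four equal
        have hiq : i = q := hip.trans hpq
        have hL : ∏ r, mom ν (cnt i j p q r) r = mom ν (cnt i j p q i) i := by
          refine Finset.prod_eq_single i (fun b _ hb => ?_)
            (fun h => absurd (Finset.mem_univ i) h)
          have hc : cnt i j p q b = 0 := by
            unfold cnt
            rw [if_neg (fun h => hb h.symm), if_neg (fun h : j = b => hb (hij.trans h).symm),
              if_neg (fun h : p = b => hb (hip.trans h).symm),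
              if_neg (fun h : q = b => hb (hiq.trans h).symm)]
          rw [hc]; exact mom0 ν b
        have hc4 : cnt i j p q i = 4 := by
          unfold cnt
          rw [if_pos rfl, if_pos hij.symm, if_pos hip.symm, if_pos hiq.symm]
        rw [hL, hc4, if_pos ⟨hij, hpq⟩, if_pos ⟨hip, hij.symm.trans hiq⟩,
          if_pos ⟨hiq, hij.symm.trans hip⟩, if_pos ⟨hij, hip, hiq⟩]
        ring
      · -- i=j, p=q, i≠p : value 1
        have hL : ∏ r, mom ν (cnt i j p q r) r = 1 := by
          refine Finset.prod_eq_one fun r _ => ?_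
          by_cases hir : i = r
          · have hc : cnt i j p q r = 2 := by
              unfold cnt
              rw [if_pos hir, if_pos (hij.symm.trans hir),
                if_neg (fun h : p = r => hip (hir.trans h.symm)),
                if_neg (fun h : q = r => hip ((hir.trans h.symm).trans hpq.symm))]
            rw [hc]; exact mom2 ν hm2 r
          · by_cases hpr : p = r
            · have hc : cnt i j p q r = 2 := by
                unfold cnt
                rw [if_neg hir, if_neg (fun h : j = r => hir (hij.trans h)),
                  if_pos hpr, if_pos (hpq.symm.trans hpr)]
              rw [hc]; exact mom2 ν hm2 r
            · have hc : cnt i j p q r = 0 := by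
                unfold cnt
                rw [if_neg hir, if_neg (fun h : j = r => hir (hij.trans h)), if_neg hpr,
                  if_neg (fun h : q = r => hpr (hpq.trans h))]
              rw [hc]; exact mom0 ν r
        rw [hL, if_pos ⟨hij, hpq⟩, if_neg (fun h : i = p ∧ j = q => hip h.1),
          if_neg (fun h : i = q ∧ j = p => hip (h.1.trans hpq.symm)),
          if_neg (fun h : i = j ∧ i = p ∧ i = q => hip h.2.1)]
        norm_num
    · -- i=j, p≠q : value 0
      have hL : ∏ r, mom ν (cnt i j p q r) r = 0 := by
        by_cases hpi : p = i
        · refine hz q ?_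
          unfold cnt
          rw [if_neg (fun h : i = q => hpq (hpi.trans h)),
            if_neg (fun h : j = q => hpq (hpi.trans (hij.trans h))),
            if_neg hpq, if_pos rfl]
        · by_cases hqi : q = i
          · refine hz p ?_
            unfold cnt
            rw [if_neg (fun h : i = p => hpi h.symm),
              if_neg (fun h : j = p => hpi (hij.trans h).symm),
              if_pos rfl, if_neg (fun h : q = p => hpi (h.symm.trans hqi))]
          · refine hz p ?_
            unfold cnt
            rw [if_neg (fun h : i = p => hpi h.symm),
              if_neg (fun h : j = p => hpi (hij.trans h).symm),
              if_pos rfl, if_neg (fun h : q = p => hpq h.symm)]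
      rw [hL, if_neg (fun h : i = j ∧ p = q => hpq h.2),
        if_neg (fun h : i = p ∧ j = q => hpq (h.1.symm.trans (hij.trans h.2))),
        if_neg (fun h : i = q ∧ j = p => hpq ((h.2.symm.trans hij.symm).trans h.1)),
        if_neg (fun h : i = j ∧ i = p ∧ i = q => hpq (h.2.1.symm.trans h.2.2))]
      norm_num
  · -- i ≠ j
    by_cases h2 : p = i ∧ q = j
    · obtain ⟨hpi, hqj⟩ := h2
      have hL : ∏ r, mom ν (cnt i j p q r) r = 1 := by
        refine Finset.prod_eq_one fun r _ => ?_
        by_cases hir : i = r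
        · have hc : cnt i j p q r = 2 := by
            unfold cnt
            rw [if_pos hir, if_neg (fun h : j = r => hij (hir.trans h.symm)),
              if_pos (hpi.trans hir),
              if_neg (fun h : q = r => hij (hir.trans (hqj.symm.trans h).symm))]
          rw [hc]; exact mom2 ν hm2 r
        · by_cases hjr : j = r
          · have hc : cnt i j p q r = 2 := by
              unfold cnt
              rw [if_neg hir, if_pos hjr,
                if_neg (fun h : p = r => hir (hpi.symm.trans h)), if_pos (hqj.trans hjr)]
            rw [hc]; exact mom2 ν hm2 r
          · have hc : cnt i j p q r = 0 := by
              unfold cnt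
              rw [if_neg hir, if_neg hjr, if_neg (fun h : p = r => hir (hpi.symm.trans h)),
                if_neg (fun h : q = r => hjr (hqj.symm.trans h))]
            rw [hc]; exact mom0 ν r
      rw [hL, if_neg (fun h : i = j ∧ p = q => hij h.1), if_pos ⟨hpi.symm, hqj.symm⟩,
        if_neg (fun h : i = q ∧ j = p => hij (h.1.trans hqj)),
        if_neg (fun h : i = j ∧ i = p ∧ i = q => hij h.1)]
      norm_num
    · by_cases h3 : p = j ∧ q = i
      · obtain ⟨hpj, hqi⟩ := h3
        have hL : ∏ r, mom ν (cnt i j p q r) r = 1 := by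
          refine Finset.prod_eq_one fun r _ => ?_
          by_cases hir : i = r
          · have hc : cnt i j p q r = 2 := by
              unfold cnt
              rw [if_pos hir, if_neg (fun h : j = r => hij (hir.trans h.symm)),
                if_neg (fun h : p = r => hij (hir.trans (hpj.symm.trans h).symm)),
                if_pos (hqi.trans hir)]
            rw [hc]; exact mom2 ν hm2 r
          · by_cases hjr : j = r
            · have hc : cnt i j p q r = 2 := by
                unfold cnt
                rw [if_neg hir, if_pos hjr, if_pos (hpj.trans hjr),
                  if_neg (fun h : q = r => hir (hqi.symm.trans h))]
              rw [hc]; exact mom2 ν hm2 r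
            · have hc : cnt i j p q r = 0 := by
                unfold cnt
                rw [if_neg hir, if_neg hjr, if_neg (fun h : p = r => hjr (hpj.symm.trans h)),
                  if_neg (fun h : q = r => hir (hqi.symm.trans h))]
              rw [hc]; exact mom0 ν r
        rw [hL, if_neg (fun h : i = j ∧ p = q => hij h.1),
          if_neg (fun h : i = p ∧ j = q => hij (h.1.trans hpj)),
          if_pos ⟨hqi.symm, hpj.symm⟩,
          if_neg (fun h : i = j ∧ i = p ∧ i = q => hij h.1)]
        norm_num
      · -- value 0
        have hL : ∏ r, mom ν (cnt i j p q r) r = 0 := by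
          by_cases hpi : p = i
          · by_cases hqp : q = p
            · refine hz j ?_
              unfold cnt
              rw [if_neg hij, if_pos rfl,
                if_neg (fun h : p = j => hij (hpi.symm.trans h)),
                if_neg (fun h : q = j => hij ((hqp.trans hpi).symm.trans h))]
            · refine hz q ?_
              unfold cnt
              rw [if_neg (fun h : i = q => hqp (hpi.trans h).symm),
                if_neg (fun h : j = q => h2 ⟨hpi, h.symm⟩),
                if_neg (fun h : p = q => hqp h.symm), if_pos rfl]
          · by_cases hpj : p = j
            · by_cases hqp : q = p
              · refine hz i ?_
                unfold cnt
                rw [if_pos rfl, if_neg (fun h : j = i => hij h.symm), if_neg hpi,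
                  if_neg (fun h : q = i => h3 ⟨hpj, h⟩)]
              · refine hz q ?_
                unfold cnt
                rw [if_neg (fun h : i = q => h3 ⟨hpj, h.symm⟩),
                  if_neg (fun h : j = q => hqp (hpj.trans h).symm),
                  if_neg (fun h : p = q => hqp h.symm), if_pos rfl]
            · by_cases hqp : q = p
              · refine hz i ?_
                unfold cnt
                rw [if_pos rfl, if_neg (fun h : j = i => hij h.symm), if_neg hpi,
                  if_neg (fun h : q = i => hpi (hqp.symm.trans h))]
              · refine hz p ?_
                unfold cnt
                rw [if_neg (fun h : i = p => hpi h.symm),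
                  if_neg (fun h : j = p => hpj h.symm), if_pos rfl, if_neg hqp]
        rw [hL, if_neg (fun h : i = j ∧ p = q => hij h.1),
          if_neg (fun h : i = p ∧ j = q => h2 ⟨h.1.symm, h.2.symm⟩),
          if_neg (fun h : i = q ∧ j = p => h3 ⟨h.2.symm, h.1.symm⟩),
          if_neg (fun h : i = j ∧ i = p ∧ i = q => hij h.1)]
        norm_num

lemma hQexp (S : Matrix (Fin n) (Fin n) ℝ) (y : Fin n → ℝ) :
    (∑ i, ∑ j, S i j * (y i * y j)) ^ 2
      = ∑ i, ∑ p, ∑ j, ∑ q, S i j * S p q * (y i * y j * (y p * y q)) := by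
  rw [sq, Finset.sum_mul_sum]
  refine Finset.sum_congr rfl fun i _ => Finset.sum_congr rfl fun p _ => ?_
  rw [Finset.sum_mul_sum]
  exact Finset.sum_congr rfl fun j _ => Finset.sum_congr rfl fun q _ => by ring

lemma stageA_integrable (hint : ∀ i, Integrable (fun t : ℝ => t ^ 4) (ν i))
    (S : Matrix (Fin n) (Fin n) ℝ) :
    Integrable (fun y : Fin n → ℝ => (∑ i, ∑ j, S i j * (y i * y j)) ^ 2) (Measure.pi ν) := by
  have he : (fun y : Fin n → ℝ => (∑ i, ∑ j, S i j * (y i * y j)) ^ 2)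
      = fun y => ∑ i, ∑ p, ∑ j, ∑ q, S i j * S p q * (y i * y j * (y p * y q)) :=
    funext fun y => hQexp S y
  rw [he]
  refine integrable_finset_sum _ fun i _ => integrable_finset_sum _ fun p _ =>
    integrable_finset_sum _ fun j _ => integrable_finset_sum _ fun q _ => ?_
  exact (mono_integrable ν hint i j p q).const_mul _

lemma stageA_key (hm1 : ∀ i, ∫ t, t ∂ν i = 0) (hm2 : ∀ i, ∫ t, t ^ 2 ∂ν i = 1)
    (hint : ∀ i, Integrable (fun t : ℝ => t ^ 4) (ν i))
    (S : Matrix (Fin n) (Fin n) ℝ) :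
    ∫ y, (∑ i, ∑ j, S i j * (y i * y j)) ^ 2 ∂Measure.pi ν
      = (∑ i, S i i) ^ 2 + (∑ i, ∑ j, S i j * S i j) + (∑ i, ∑ p, S i p * S p i)
        + ∑ i, S i i * S i i * (mom ν 4 i - 3) := by
  have hterm : ∀ i p j q : Fin n,
      Integrable (fun y : Fin n → ℝ => S i j * S p q * (y i * y j * (y p * y q)))
        (Measure.pi ν) := fun i p j q => (mono_integrable ν hint i j p q).const_mul _
  have hI3 : ∀ i p j : Fin n, Integrable
      (fun y : Fin n → ℝ => ∑ q, S i j * S p q * (y i * y j * (y p * y q))) (Measure.pi ν) :=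
    fun i p j => integrable_finset_sum _ fun q _ => hterm i p j q
  have hI2 : ∀ i p : Fin n, Integrable
      (fun y : Fin n → ℝ => ∑ j, ∑ q, S i j * S p q * (y i * y j * (y p * y q)))
      (Measure.pi ν) := fun i p => integrable_finset_sum _ fun j _ => hI3 i p j
  have hI1 : ∀ i : Fin n, Integrable
      (fun y : Fin n → ℝ => ∑ p, ∑ j, ∑ q, S i j * S p q * (y i * y j * (y p * y q)))
      (Measure.pi ν) := fun i => integrable_finset_sum _ fun p _ => hI2 i p
  calc ∫ y, (∑ i, ∑ j, S i j * (y i * y j)) ^ 2 ∂Measure.pi ν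
      = ∫ y, ∑ i, ∑ p, ∑ j, ∑ q, S i j * S p q * (y i * y j * (y p * y q)) ∂Measure.pi ν := by
        simp_rw [hQexp S]
    _ = ∑ i, ∫ y, ∑ p, ∑ j, ∑ q, S i j * S p q * (y i * y j * (y p * y q)) ∂Measure.pi ν :=
        integral_finset_sum _ fun i _ => hI1 i
    _ = ∑ i, ∑ p, ∫ y, ∑ j, ∑ q, S i j * S p q * (y i * y j * (y p * y q)) ∂Measure.pi ν :=
        Finset.sum_congr rfl fun i _ => integral_finset_sum _ fun p _ => hI2 i p
    _ = ∑ i, ∑ p, ∑ j, ∫ y, ∑ q, S i j * S p q * (y i * y j * (y p * y q)) ∂Measure.pi ν :=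
        Finset.sum_congr rfl fun i _ => Finset.sum_congr rfl fun p _ =>
          integral_finset_sum _ fun j _ => hI3 i p j
    _ = ∑ i, ∑ p, ∑ j, ∑ q, ∫ y, S i j * S p q * (y i * y j * (y p * y q)) ∂Measure.pi ν :=
        Finset.sum_congr rfl fun i _ => Finset.sum_congr rfl fun p _ =>
          Finset.sum_congr rfl fun j _ => integral_finset_sum _ fun q _ => hterm i p j q
    _ = ∑ i, ∑ p, ∑ j, ∑ q, S i j * S p q *
          ((if i = j ∧ p = q then 1 else 0) + (if i = p ∧ j = q then 1 else 0)
            + (if i = q ∧ j = p then 1 else 0)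
            + (if i = j ∧ i = p ∧ i = q then mom ν 4 i - 3 else 0)) := by
        refine Finset.sum_congr rfl fun i _ => Finset.sum_congr rfl fun p _ =>
          Finset.sum_congr rfl fun j _ => Finset.sum_congr rfl fun q _ => ?_
        rw [MeasureTheory.integral_const_mul, mono_integral ν i j p q,
          prod_mom_eval ν hm1 hm2 i j p q]
    _ = (∑ i, ∑ p, ∑ j, ∑ q, S i j * S p q * (if i = j ∧ p = q then 1 else 0))
        + (∑ i, ∑ p, ∑ j, ∑ q, S i j * S p q * (if i = p ∧ j = q then 1 else 0))
        + (∑ i, ∑ p, ∑ j, ∑ q, S i j * S p q * (if i = q ∧ j = p then 1 else 0))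
        + ∑ i, ∑ p, ∑ j, ∑ q, S i j * S p q *
            (if i = j ∧ i = p ∧ i = q then mom ν 4 i - 3 else 0) := by
        simp only [mul_add, Finset.sum_add_distrib]
    _ = (∑ i, S i i) ^ 2 + (∑ i, ∑ j, S i j * S i j) + (∑ i, ∑ p, S i p * S p i)
        + ∑ i, S i i * S i i * (mom ν 4 i - 3) := by
        have hT1 : ∀ i p : Fin n,
            ∑ j, ∑ q, S i j * S p q * (if i = j ∧ p = q then (1:ℝ) else 0) = S i i * S p p := by
          intro i p
          calc ∑ j, ∑ q, S i j * S p q * (if i = j ∧ p = q then (1:ℝ) else 0)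
              = ∑ j, if i = j then S i j * S p p else 0 := by
                refine Finset.sum_congr rfl fun j _ => ?_
                by_cases hij : i = j
                · simp [hij, mul_ite, mul_one, mul_zero, Finset.sum_ite_eq]
                · simp [hij]
            _ = S i i * S p p := by simp [Finset.sum_ite_eq]
        have hT2 : ∀ i p : Fin n,
            ∑ j, ∑ q, S i j * S p q * (if i = p ∧ j = q then (1:ℝ) else 0)
              = if i = p then ∑ j, S i j * S p j else 0 := by
          intro i p
          by_cases hip : i = p
          · simp [hip, mul_ite, mul_one, mul_zero, Finset.sum_ite_eq]
          · simp [hip]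
        have hT3 : ∀ i p : Fin n,
            ∑ j, ∑ q, S i j * S p q * (if i = q ∧ j = p then (1:ℝ) else 0)
              = S i p * S p i := by
          intro i p
          calc ∑ j, ∑ q, S i j * S p q * (if i = q ∧ j = p then (1:ℝ) else 0)
              = ∑ j, if j = p then S i j * S p i else 0 := by
                refine Finset.sum_congr rfl fun j _ => ?_
                by_cases hjp : j = p
                · simp [hjp, mul_ite, mul_one, mul_zero, Finset.sum_ite_eq]
                · simp [hjp]
            _ = S i p * S p i := by simp [Finset.sum_ite_eq']
        have hT4 : ∀ i p : Fin n,
            ∑ j, ∑ q, S i j * S p q * (if i = j ∧ i = p ∧ i = q then mom ν 4 i - 3 else 0)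
              = if i = p then S i i * S p i * (mom ν 4 i - 3) else 0 := by
          intro i p
          by_cases hip : i = p
          · calc ∑ j, ∑ q, S i j * S p q * (if i = j ∧ i = p ∧ i = q then mom ν 4 i - 3 else 0)
                = ∑ j, if i = j then S i j * S p i * (mom ν 4 i - 3) else 0 := by
                  refine Finset.sum_congr rfl fun j _ => ?_
                  by_cases hij : i = j
                  · simp [← hij, ← hip, mul_ite, mul_one, mul_zero, Finset.sum_ite_eq]
                  · simp [hij]
              _ = if i = p then S i i * S p i * (mom ν 4 i - 3) else 0 := by
                  simp [Finset.sum_ite_eq, hip]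
          · simp [hip]
        rw [Finset.sum_congr rfl fun i (_ : i ∈ Finset.univ) =>
            Finset.sum_congr rfl fun p (_ : p ∈ Finset.univ) => hT1 i p,
          Finset.sum_congr rfl fun i (_ : i ∈ Finset.univ) =>
            Finset.sum_congr rfl fun p (_ : p ∈ Finset.univ) => hT2 i p,
          Finset.sum_congr rfl fun i (_ : i ∈ Finset.univ) =>
            Finset.sum_congr rfl fun p (_ : p ∈ Finset.univ) => hT3 i p,
          Finset.sum_congr rfl fun i (_ : i ∈ Finset.univ) =>
            Finset.sum_congr rfl fun p (_ : p ∈ Finset.univ) => hT4 i p]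
        congr 1
        · congr 1
          · congr 1
            · rw [← Finset.sum_mul_sum, sq]
            · exact Finset.sum_congr rfl fun i _ => by simp [Finset.sum_ite_eq]
        · refine Finset.sum_congr rfl fun i _ => ?_
          simp [Finset.sum_ite_eq]

lemma stageA_bound (hm1 : ∀ i, ∫ t, t ∂ν i = 0) (hm2 : ∀ i, ∫ t, t ^ 2 ∂ν i = 1)
    (hint : ∀ i, Integrable (fun t : ℝ => t ^ 4) (ν i)) (m₄ : ℝ) (hm₄0 : 0 ≤ m₄)
    (hm4 : ∀ i, mom ν 4 i ≤ m₄)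
    (S : Matrix (Fin n) (Fin n) ℝ) (hsym : ∀ i j, S i j = S j i) :
    ∫ y, (∑ i, ∑ j, S i j * (y i * y j)) ^ 2 ∂Measure.pi ν
      ≤ (∑ i, S i i) ^ 2 + (2 + m₄) * ∑ i, ∑ j, (S i j) ^ 2 := by
  rw [stageA_key ν hm1 hm2 hint S]
  have e1 : (∑ i, ∑ j, S i j * S i j) = ∑ i, ∑ j, (S i j) ^ 2 :=
    Finset.sum_congr rfl fun i _ => Finset.sum_congr rfl fun j _ => (sq (S i j)).symm
  have e2 : (∑ i, ∑ p, S i p * S p i) = ∑ i, ∑ j, (S i j) ^ 2 :=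
    Finset.sum_congr rfl fun i _ => Finset.sum_congr rfl fun p _ => by
      rw [← hsym i p, sq]
  have h4 : ∑ i, S i i * S i i * (mom ν 4 i - 3) ≤ m₄ * ∑ i, ∑ j, (S i j) ^ 2 := by
    calc ∑ i, S i i * S i i * (mom ν 4 i - 3) ≤ ∑ i, (S i i) ^ 2 * m₄ := by
          refine Finset.sum_le_sum fun i _ => ?_
          have h := hm4 i
          nlinarith [sq_nonneg (S i i)]
      _ = m₄ * ∑ i, (S i i) ^ 2 := by rw [← Finset.sum_mul, mul_comm]
      _ ≤ m₄ * ∑ i, ∑ j, (S i j) ^ 2 := by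
          refine mul_le_mul_of_nonneg_left ?_ hm₄0
          refine Finset.sum_le_sum fun i _ => ?_
          exact Finset.single_le_sum (f := fun j => (S i j) ^ 2)
            (fun j _ => sq_nonneg _) (Finset.mem_univ i)
  rw [e1, e2]
  linarith

lemma stageA_lintegral (hm1 : ∀ i, ∫ t, t ∂ν i = 0) (hm2 : ∀ i, ∫ t, t ^ 2 ∂ν i = 1)
    (hint : ∀ i, Integrable (fun t : ℝ => t ^ 4) (ν i)) (m₄ : ℝ) (hm₄0 : 0 ≤ m₄)
    (hm4 : ∀ i, mom ν 4 i ≤ m₄)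
    (S : Matrix (Fin n) (Fin n) ℝ) (hsym : ∀ i j, S i j = S j i) :
    ∫⁻ y, ENNReal.ofReal ((∑ i, ∑ j, S i j * (y i * y j)) ^ 2) ∂Measure.pi ν
      ≤ ENNReal.ofReal ((∑ i, S i i) ^ 2 + (2 + m₄) * ∑ i, ∑ j, (S i j) ^ 2) := by
  rw [← MeasureTheory.ofReal_integral_eq_lintegral_ofReal (stageA_integrable ν hint S)
    (Filter.Eventually.of_forall fun y => sq_nonneg _)]
  exact ENNReal.ofReal_le_ofReal (stageA_bound ν hm1 hm2 hint m₄ hm₄0 hm4 S hsym)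

end StageA


lemma psd_trace_nonneg {n : ℕ} {M : Matrix (Fin n) (Fin n) ℝ} (hM : M.PosSemidef) :
    0 ≤ M.trace := by
  rw [Matrix.trace]
  refine Finset.sum_nonneg fun i _ => ?_
  have h := hM.dotProduct_mulVec_nonneg (Pi.single i 1)
  simpa [Matrix.mulVec_single, single_dotProduct, Matrix.diag] using h

open scoped MatrixOrder in
lemma psd_trace_mul_nonneg {n : ℕ} {P Q : Matrix (Fin n) (Fin n) ℝ}
    (hP : P.PosSemidef) (hQ : Q.PosSemidef) : 0 ≤ (P * Q).trace := by
  have h1 : P = CFC.sqrt P * CFC.sqrt P := (CFC.sqrt_mul_sqrt_self P hP.nonneg).symm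
  rw [h1, Matrix.mul_assoc, Matrix.trace_mul_comm]
  refine psd_trace_nonneg ?_
  have h2 := hQ.conjTranspose_mul_mul_same (CFC.sqrt P)
  rwa [(CFC.sqrt_nonneg P).posSemidef.isHermitian.eq] at h2

lemma trace_eq_rank_of_idem {n : ℕ} (A : Matrix (Fin n) (Fin n) ℝ)
    (hAidem : A * A = A) : A.trace = (A.rank : ℝ) := by
  set f := A.mulVecLin with hf
  have hff : f ∘ₗ f = f := by rw [hf, ← Matrix.mulVecLin_mul, hAidem]
  have hproj : LinearMap.IsProj (LinearMap.range f) f := by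
    refine ⟨fun x => LinearMap.mem_range_self f x, ?_⟩
    rintro x ⟨y, rfl⟩
    have : (f ∘ₗ f) y = f y := by rw [hff]
    simpa using this
  have htr := hproj.trace
  have h1 : LinearMap.trace ℝ (Fin n → ℝ) f = A.trace := by
    rw [LinearMap.trace_eq_matrix_trace ℝ (Pi.basisFun ℝ (Fin n)) f]
    congr 1
    rw [LinearMap.toMatrix_eq_toMatrix', hf, ← Matrix.toLin'_apply']
    exact LinearMap.toMatrix'_toLin' A
  rw [h1] at htr
  rw [htr]
  rfl

/-- conjTranspose = transpose over ℝ -/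
lemma ctr {n m : ℕ} (M : Matrix (Fin n) (Fin m) ℝ) : Mᴴ = Mᵀ := by
  ext i j; simp [Matrix.conjTranspose_apply]

/-- Stage B: the matrix facts for a ±1 sign vector. -/
lemma stageB {n k : ℕ} (A : Matrix (Fin n) (Fin n) ℝ) (hAsymm : A.IsSymm)
    (hAidem : A * A = A) (hArank : A.rank = k)
    (B : Matrix (Fin n) (Fin n) ℝ) (c₀ : ℝ) (hc₀ : 0 < c₀)
    (hB : (c₀ • (1 : Matrix (Fin n) (Fin n) ℝ) - B * Bᵀ).PosSemidef)
    (x : Fin n → ℝ) (hx : ∀ s, x s = 1 ∨ x s = -1) :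
    (∀ i j, ((A * Matrix.diagonal x * B)ᵀ * (A * Matrix.diagonal x * B)) i j
        = ((A * Matrix.diagonal x * B)ᵀ * (A * Matrix.diagonal x * B)) j i) ∧
    0 ≤ ∑ i, ((A * Matrix.diagonal x * B)ᵀ * (A * Matrix.diagonal x * B)) i i ∧
    ∑ i, ((A * Matrix.diagonal x * B)ᵀ * (A * Matrix.diagonal x * B)) i i ≤ c₀ * k ∧
    ∑ i, ∑ j, (((A * Matrix.diagonal x * B)ᵀ * (A * Matrix.diagonal x * B)) i j) ^ 2
      ≤ c₀ ^ 2 * k := by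
  have hAT : Aᵀ = A := hAsymm
  set D := Matrix.diagonal x with hD
  have hDT : Dᵀ = D := Matrix.diagonal_transpose x
  have hDD : D * D = 1 := by
    have hone : (fun i => x i * x i) = fun _ : Fin n => (1 : ℝ) :=
      funext fun s => by rcases hx s with h | h <;> rw [h] <;> norm_num
    rw [hD, Matrix.diagonal_mul_diagonal, hone, Matrix.diagonal_one]
  set N := A * D * B with hN
  set S := Nᵀ * N with hS
  -- symmetry
  have hsym : ∀ i j, S i j = S j i := by
    intro i j
    simp only [hS, Matrix.mul_apply, Matrix.transpose_apply]
    exact Finset.sum_congr rfl fun a _ => mul_comm _ _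
  set C := A * D with hC
  have hCt : Cᵀ = D * A := by rw [hC, Matrix.transpose_mul, hDT, hAT]
  have hCCt : C * Cᵀ = A := by
    rw [hCt, hC, Matrix.mul_assoc, ← Matrix.mul_assoc D D A, hDD, Matrix.one_mul, hAidem]
  have hBBt : (B * Bᵀ).PosSemidef := by
    have h := Matrix.posSemidef_self_mul_conjTranspose B
    rwa [ctr] at h
  set W := C * (B * Bᵀ) * Cᵀ with hW
  have hW_psd : W.PosSemidef := by
    have h := hBBt.mul_mul_conjTranspose_same C
    rwa [ctr] at h
  have hΔ_psd : (c₀ • A - W).PosSemidef := by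
    have h := hB.mul_mul_conjTranspose_same C
    rw [ctr] at h
    have he : C * (c₀ • (1 : Matrix (Fin n) (Fin n) ℝ) - B * Bᵀ) * Cᵀ = c₀ • A - W := by
      rw [Matrix.mul_sub, Matrix.sub_mul, Matrix.mul_smul, Matrix.mul_one, Matrix.smul_mul, hCCt,
        hW]
    rwa [he] at h
  have htraceA : A.trace = (k : ℝ) := by
    rw [trace_eq_rank_of_idem A hAidem, hArank]
  have htrW_le : W.trace ≤ c₀ * k := by
    have h0 := psd_trace_nonneg hΔ_psd
    rw [Matrix.trace_sub, Matrix.trace_smul, smul_eq_mul, htraceA] at h0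
    linarith
  have htrW_nonneg : 0 ≤ W.trace := psd_trace_nonneg hW_psd
  have hNNt : N * Nᵀ = W := by
    rw [hN, hW, hC, Matrix.transpose_mul, hCt]
    noncomm_ring
  have hS_trace : ∑ i, S i i = W.trace := by
    have : S.trace = W.trace := by rw [hS, Matrix.trace_mul_comm, hNNt]
    rw [← this]; rfl
  have hWA : W * A = W := by
    rw [hW, hCt, Matrix.mul_assoc (C * (B * Bᵀ)) (D * A) A, Matrix.mul_assoc D A A, hAidem]
  have htrWW : (W * W).trace ≤ c₀ * W.trace := by
    have h0 := psd_trace_mul_nonneg hW_psd hΔ_psd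
    rw [Matrix.mul_sub, Matrix.mul_smul, hWA, Matrix.trace_sub, Matrix.trace_smul,
      smul_eq_mul] at h0
    linarith
  have hSS : (S * S).trace = (W * W).trace := by
    have h1 : S * S = Nᵀ * (W * N) := by rw [hS, ← hNNt]; noncomm_ring
    rw [h1, Matrix.trace_mul_comm, Matrix.mul_assoc, hNNt]
  have hfrob : ∑ i, ∑ j, (S i j) ^ 2 = (S * S).trace := by
    rw [Matrix.trace]
    refine Finset.sum_congr rfl fun i _ => ?_
    rw [Matrix.diag_apply, Matrix.mul_apply]
    exact Finset.sum_congr rfl fun j _ => by rw [sq, ← hsym i j]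
  refine ⟨hsym, ?_, ?_, ?_⟩
  · rw [hS_trace]; exact htrW_nonneg
  · rw [hS_trace]; exact htrW_le
  · rw [hfrob, hSS]
    calc (W * W).trace ≤ c₀ * W.trace := htrWW
    _ ≤ c₀ * (c₀ * k) := by
        exact mul_le_mul_of_nonneg_left htrW_le (le_of_lt hc₀)
    _ = c₀ ^ 2 * k := by ring


lemma quad_expand {n : ℕ} (M : Matrix (Fin n) (Fin n) ℝ) (y : Fin n → ℝ) :
    ∑ a, (M.mulVec y a) ^ 2 = ∑ i, ∑ j, (Mᵀ * M) i j * (y i * y j) := by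
  calc ∑ a, (M.mulVec y a) ^ 2
      = ∑ a, ∑ i, ∑ j, (M a i * y i) * (M a j * y j) := by
        refine Finset.sum_congr rfl fun a _ => ?_
        simp [Matrix.mulVec, dotProduct, sq, Finset.sum_mul_sum]
    _ = ∑ i, ∑ a, ∑ j, (M a i * y i) * (M a j * y j) := Finset.sum_comm
    _ = ∑ i, ∑ j, ∑ a, (M a i * y i) * (M a j * y j) :=
        Finset.sum_congr rfl fun i _ => Finset.sum_comm
    _ = ∑ i, ∑ j, (Mᵀ * M) i j * (y i * y j) := by
        refine Finset.sum_congr rfl fun i _ => Finset.sum_congr rfl fun j _ => ?_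
        rw [Matrix.mul_apply, Finset.sum_mul]
        exact Finset.sum_congr rfl fun a _ => by rw [Matrix.transpose_apply]; ring

lemma map_pi_of_iIndep {ι : Type*} [Fintype ι] {Ω : Type*} [MeasurableSpace Ω] {μ : Measure Ω}
    [IsProbabilityMeasure μ] (f : ι → Ω → ℝ) (hmeas : ∀ i, Measurable (f i))
    (h : iIndepFun f μ) :
    μ.map (fun ω i => f i ω) = Measure.pi (fun i => μ.map (f i)) := by
  haveI : ∀ i, IsProbabilityMeasure (μ.map (f i)) :=
    fun i => Measure.isProbabilityMeasure_map (hmeas i).aemeasurable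
  have hF : Measurable (fun ω i => f i ω) := measurable_pi_lambda _ hmeas
  refine (Measure.pi_eq fun s hs => ?_).symm
  rw [Measure.map_apply hF (MeasurableSet.univ_pi hs)]
  have hpre : (fun ω i => f i ω) ⁻¹' Set.univ.pi s = ⋂ i, f i ⁻¹' s i := by
    ext ω; simp [Set.mem_univ_pi]
  rw [hpre, h.meas_iInter fun i => ⟨s i, hs i, rfl⟩]
  exact Finset.prod_congr rfl fun i _ => (Measure.map_apply (hmeas i) (hs i)).symm



/-- the quartic functional of the joint sign/noise vector -/
noncomputable def phi {n : ℕ} (A B : Matrix (Fin n) (Fin n) ℝ)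
    (z : Fin n ⊕ Fin n → ℝ) : ℝ :=
  (∑ a, ((A * Matrix.diagonal (fun i => z (Sum.inl i)) * B).mulVec
    (fun i => z (Sum.inr i)) a) ^ 2) ^ 2

lemma phi_nonneg {n : ℕ} (A B : Matrix (Fin n) (Fin n) ℝ) (z : Fin n ⊕ Fin n → ℝ) :
    0 ≤ phi A B z := sq_nonneg _

lemma entry_expand {n : ℕ} (A B : Matrix (Fin n) (Fin n) ℝ) (x y : Fin n → ℝ) (a : Fin n) :
    (A * Matrix.diagonal x * B).mulVec y a = ∑ i, (∑ s, A a s * x s * B s i) * y i := by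
  simp [Matrix.mulVec, dotProduct, Matrix.mul_apply, Matrix.diagonal_apply, mul_ite,
    mul_zero, ite_mul, zero_mul, Finset.sum_ite_eq, Finset.sum_ite_eq', mul_assoc]

lemma phi_meas {n : ℕ} (A B : Matrix (Fin n) (Fin n) ℝ) : Measurable (phi A B) := by
  have hrw : phi A B = fun z =>
      (∑ a, (∑ i, (∑ s, A a s * z (Sum.inl s) * B s i) * z (Sum.inr i)) ^ 2) ^ 2 := by
    funext z
    unfold phi
    congr 1
    refine Finset.sum_congr rfl fun a _ => ?_
    congr 1
    exact entry_expand A B _ _ a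
  rw [hrw]
  refine (Finset.measurable_sum _ fun a _ => ?_).pow_const 2
  refine (Finset.measurable_sum _ fun i _ => ?_).pow_const 2
  exact (Finset.measurable_sum _ fun s _ =>
    (by fun_prop : Measurable fun z : Fin n ⊕ Fin n → ℝ => A a s * z (Sum.inl s) * B s i)).mul
    (measurable_pi_apply (Sum.inr i))

lemma phi_pt {n : ℕ} (A B : Matrix (Fin n) (Fin n) ℝ) (z : Fin n ⊕ Fin n → ℝ) :
    vecNorm ((A * Matrix.diagonal (fun i => z (Sum.inl i)) * B).mulVec
      (fun i => z (Sum.inr i))) ^ 4 = phi A B z := by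
  rw [vecNorm, show (4:ℕ) = 2*2 from rfl, pow_mul,
    Real.sq_sqrt (Finset.sum_nonneg fun a _ => sq_nonneg _)]
  rfl

lemma phi_symm_eq {n : ℕ} (A B : Matrix (Fin n) (Fin n) ℝ) (x y : Fin n → ℝ) :
    phi A B ((MeasurableEquiv.sumPiEquivProdPi (fun _ : Fin n ⊕ Fin n => ℝ)).symm (x, y))
      = (∑ i, ∑ j, (((A * Matrix.diagonal x * B)ᵀ * (A * Matrix.diagonal x * B)) i j)
          * (y i * y j)) ^ 2 := by
  have hz : phi A B ((MeasurableEquiv.sumPiEquivProdPi (fun _ : Fin n ⊕ Fin n => ℝ)).symm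
      (x, y)) = (∑ a, ((A * Matrix.diagonal x * B).mulVec y a) ^ 2) ^ 2 := rfl
  rw [hz, quad_expand]

/-- The core double-lintegral bound. -/
lemma core_bound {n k : ℕ} (A : Matrix (Fin n) (Fin n) ℝ) (hAsymm : A.IsSymm)
    (hAidem : A * A = A) (hArank : A.rank = k)
    (B : Matrix (Fin n) (Fin n) ℝ) (c₀ : ℝ) (hc₀ : 0 < c₀)
    (hB : (c₀ • (1 : Matrix (Fin n) (Fin n) ℝ) - B * Bᵀ).PosSemidef)
    (νg νε : Fin n → Measure ℝ) [∀ i, IsProbabilityMeasure (νg i)]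
    [∀ i, IsProbabilityMeasure (νε i)]
    (hm1 : ∀ i, ∫ t, t ∂νε i = 0) (hm2 : ∀ i, ∫ t, t ^ 2 ∂νε i = 1)
    (hint : ∀ i, Integrable (fun t : ℝ => t ^ 4) (νε i))
    (m₄ : ℝ) (hm₄0 : 0 ≤ m₄) (hm4 : ∀ i, mom νε 4 i ≤ m₄)
    (hae : ∀ᵐ x ∂Measure.pi νg, ∀ s, x s = 1 ∨ x s = -1) :
    ∫⁻ x, ∫⁻ y, ENNReal.ofReal
        (phi A B ((MeasurableEquiv.sumPiEquivProdPi (fun _ : Fin n ⊕ Fin n => ℝ)).symm (x, y)))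
      ∂Measure.pi νε ∂Measure.pi νg
      ≤ ENNReal.ofReal (c₀ ^ 2 * (k:ℝ) ^ 2 + (2 + m₄) * c₀ ^ 2 * (k:ℝ)) := by
  calc ∫⁻ x, ∫⁻ y, ENNReal.ofReal
        (phi A B ((MeasurableEquiv.sumPiEquivProdPi (fun _ : Fin n ⊕ Fin n => ℝ)).symm (x, y)))
      ∂Measure.pi νε ∂Measure.pi νg
      ≤ ∫⁻ _, ENNReal.ofReal (c₀ ^ 2 * (k:ℝ) ^ 2 + (2 + m₄) * c₀ ^ 2 * (k:ℝ))
        ∂Measure.pi νg := by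
        refine lintegral_mono_ae (hae.mono fun x hx => ?_)
        obtain ⟨hsym, htr0, htr, hfrob⟩ := stageB A hAsymm hAidem hArank B c₀ hc₀ hB x hx
        calc ∫⁻ y, ENNReal.ofReal (phi A B
              ((MeasurableEquiv.sumPiEquivProdPi (fun _ : Fin n ⊕ Fin n => ℝ)).symm (x, y)))
            ∂Measure.pi νε
            = ∫⁻ y, ENNReal.ofReal
                ((∑ i, ∑ j, (((A * Matrix.diagonal x * B)ᵀ * (A * Matrix.diagonal x * B)) i j)
                  * (y i * y j)) ^ 2) ∂Measure.pi νε :=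
              lintegral_congr fun y => by rw [phi_symm_eq]
          _ ≤ ENNReal.ofReal
                ((∑ i, ((A * Matrix.diagonal x * B)ᵀ * (A * Matrix.diagonal x * B)) i i) ^ 2
                  + (2 + m₄) * ∑ i, ∑ j,
                    (((A * Matrix.diagonal x * B)ᵀ * (A * Matrix.diagonal x * B)) i j) ^ 2) :=
              stageA_lintegral νε hm1 hm2 hint m₄ hm₄0 hm4 _ hsym
          _ ≤ ENNReal.ofReal (c₀ ^ 2 * (k:ℝ) ^ 2 + (2 + m₄) * c₀ ^ 2 * (k:ℝ)) := by
              refine ENNReal.ofReal_le_ofReal ?_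
              have ha : (∑ i, ((A * Matrix.diagonal x * B)ᵀ * (A * Matrix.diagonal x * B)) i i)
                  ^ 2 ≤ (c₀ * (k:ℝ)) ^ 2 := pow_le_pow_left₀ htr0 htr 2
              have hb : (2 + m₄) * (∑ i, ∑ j,
                    (((A * Matrix.diagonal x * B)ᵀ * (A * Matrix.diagonal x * B)) i j) ^ 2)
                  ≤ (2 + m₄) * (c₀ ^ 2 * (k:ℝ)) :=
                mul_le_mul_of_nonneg_left hfrob (by linarith)
              nlinarith [ha, hb]
    _ = ENNReal.ofReal (c₀ ^ 2 * (k:ℝ) ^ 2 + (2 + m₄) * c₀ ^ 2 * (k:ℝ)) := by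
        rw [lintegral_const, measure_univ, mul_one]

/-- Fourth-moment bound: if `A` is a projection matrix of rank `k`, `B Bᵀ ⪯ c₀ I`, the
coordinates of `ε` are independent with mean zero, variance one and fourth moments at most
`m₄`, and `G` is an independent diagonal matrix of i.i.d. Rademacher signs, then
`E ‖A G B ε‖⁴ ≤ c₀² k² + (2 + m₄) c₀² k`. -/
theorem fourth_moment_bound_AGBeps
    {Ω : Type*} [MeasurableSpace Ω] (μ : Measure Ω) [IsProbabilityMeasure μ]
    {n k : ℕ} (A : Matrix (Fin n) (Fin n) ℝ) (hAsymm : A.IsSymm) (hAidem : A * A = A)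
    (hArank : A.rank = k)
    (B : Matrix (Fin n) (Fin n) ℝ) (c₀ : ℝ) (hc₀ : 0 < c₀)
    (hB : (c₀ • (1 : Matrix (Fin n) (Fin n) ℝ) - B * Bᵀ).PosSemidef)
    (g ε : Fin n → Ω → ℝ)
    (hgmeas : ∀ i, Measurable (g i)) (hεmeas : ∀ i, Measurable (ε i))
    (hindep : iIndepFun (Sum.elim g ε : Fin n ⊕ Fin n → Ω → ℝ) μ)
    (hlaw₁ : ∀ i, μ {ω | g i ω = 1} = 1 / 2)
    (hlaw₂ : ∀ i, μ {ω | g i ω = -1} = 1 / 2)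
    (hmean : ∀ i, ∫ ω, ε i ω ∂μ = 0)
    (hvar : ∀ i, ∫ ω, (ε i ω) ^ 2 ∂μ = 1)
    (m₄ : ℝ) (hmom4 : ∀ i, Integrable (fun ω => (ε i ω) ^ 4) μ)
    (hm₄ : ∀ i, ∫ ω, (ε i ω) ^ 4 ∂μ ≤ m₄) :
    (∫ ω, vecNorm ((A * Matrix.diagonal (fun i => g i ω) * B).mulVec (fun i => ε i ω)) ^ 4 ∂μ)
      ≤ c₀ ^ 2 * (k : ℝ) ^ 2 + (2 + m₄) * c₀ ^ 2 * (k : ℝ) := by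
  classical
  rcases Nat.eq_zero_or_pos n with hn | hn
  · subst hn
    have hk : k = 0 := by
      have h := Matrix.rank_le_card_width A
      rw [hArank] at h
      simpa using h
    subst hk
    have hz : ∀ ω : Ω, vecNorm ((A * Matrix.diagonal (fun i => g i ω) * B).mulVec
        (fun i => ε i ω)) ^ 4 = 0 := by
      intro ω
      rw [vecNorm]
      simp
    simp only [hz, integral_zero]
    norm_num
  · have hm₄0 : (0:ℝ) ≤ m₄ :=
      le_trans (integral_nonneg fun ω => by positivity) (hm₄ ⟨0, hn⟩)
    have hXmeas : ∀ s, Measurable ((Sum.elim g ε : Fin n ⊕ Fin n → Ω → ℝ) s) := by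
      rintro (s | s); exacts [hgmeas s, hεmeas s]
    set Z : Ω → (Fin n ⊕ Fin n → ℝ) := fun ω s => Sum.elim g ε s ω with hZdef
    have hZ : Measurable Z := measurable_pi_lambda _ hXmeas
    haveI hprob : ∀ s : Fin n ⊕ Fin n, IsProbabilityMeasure (μ.map (Sum.elim g ε s)) :=
      fun s => Measure.isProbabilityMeasure_map (hXmeas s).aemeasurable
    haveI : ∀ i : Fin n, IsProbabilityMeasure
        ((fun i : Fin n => μ.map (Sum.elim g ε (Sum.inr i))) i) :=
      fun i => hprob (Sum.inr i)
    haveI : ∀ i : Fin n, IsProbabilityMeasure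
        ((fun i : Fin n => μ.map (Sum.elim g ε (Sum.inl i))) i) :=
      fun i => hprob (Sum.inl i)
    have hmap : μ.map Z = Measure.pi (fun s => μ.map (Sum.elim g ε s)) :=
      map_pi_of_iIndep _ hXmeas hindep
    have hε1 : ∀ i : Fin n, ∫ t, t ∂((fun i : Fin n => μ.map (Sum.elim g ε (Sum.inr i))) i)
        = 0 := by
      intro i
      have h : ∫ t, t ∂(μ.map (ε i)) = ∫ ω, ε i ω ∂μ :=
        integral_map (hεmeas i).aemeasurable aestronglyMeasurable_id
      exact h.trans (hmean i)
    have hε2 : ∀ i : Fin n,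
        ∫ t, t ^ 2 ∂((fun i : Fin n => μ.map (Sum.elim g ε (Sum.inr i))) i) = 1 := by
      intro i
      have h : ∫ t, t ^ 2 ∂(μ.map (ε i)) = ∫ ω, (ε i ω) ^ 2 ∂μ :=
        integral_map (hεmeas i).aemeasurable
          (measurable_id.pow_const 2).aestronglyMeasurable
      exact h.trans (hvar i)
    have hε4int : ∀ i : Fin n, Integrable (fun t : ℝ => t ^ 4)
        ((fun i : Fin n => μ.map (Sum.elim g ε (Sum.inr i))) i) := by
      intro i
      refine (integrable_map_measure (measurable_id.pow_const 4).aestronglyMeasurable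
        (hεmeas i).aemeasurable).2 ?_
      exact hmom4 i
    have hε4 : ∀ i : Fin n,
        mom (fun i : Fin n => μ.map (Sum.elim g ε (Sum.inr i))) 4 i ≤ m₄ := by
      intro i
      have h : ∫ t, t ^ 4 ∂(μ.map (ε i)) = ∫ ω, (ε i ω) ^ 4 ∂μ :=
        integral_map (hεmeas i).aemeasurable
          (measurable_id.pow_const 4).aestronglyMeasurable
      exact le_trans (le_of_eq h) (hm₄ i)
    have hgae : ∀ s : Fin n, (μ.map (Sum.elim g ε (Sum.inl s)))
        {t : ℝ | ¬(t = 1 ∨ t = -1)} = 0 := by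
      intro s
      have hset : {t : ℝ | ¬(t = 1 ∨ t = -1)} = ({1} ∪ {-1} : Set ℝ)ᶜ := by
        ext t
        simp only [Set.mem_setOf_eq, Set.mem_compl_iff, Set.mem_union, Set.mem_singleton_iff]
      have hmeasset : MeasurableSet (({1} ∪ {-1} : Set ℝ)) :=
        (measurableSet_singleton 1).union (measurableSet_singleton (-1))
      have hν : μ.map (Sum.elim g ε (Sum.inl s)) = μ.map (g s) := rfl
      rw [hν, hset, Measure.map_apply (hgmeas s) hmeasset.compl, Set.preimage_compl]
      have hpre : g s ⁻¹' ({1} ∪ {-1}) = {ω | g s ω = 1} ∪ {ω | g s ω = -1} := by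
        ext ω
        simp only [Set.mem_preimage, Set.mem_union, Set.mem_singleton_iff, Set.mem_setOf_eq]
      have hm1 : MeasurableSet {ω | g s ω = 1} := hgmeas s (measurableSet_singleton 1)
      have hm2 : MeasurableSet {ω | g s ω = -1} := hgmeas s (measurableSet_singleton (-1))
      have hdisj : Disjoint {ω | g s ω = 1} {ω | g s ω = -1} := by
        rw [Set.disjoint_left]
        intro ω h1 h2
        simp only [Set.mem_setOf_eq] at h1 h2
        rw [h1] at h2
        norm_num at h2
      rw [hpre, measure_compl (hm1.union hm2) (measure_ne_top μ _), measure_univ,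
        measure_union hdisj hm2, hlaw₁ s, hlaw₂ s, ENNReal.add_halves, tsub_self]
    have hae : ∀ᵐ x ∂(Measure.pi fun i : Fin n => μ.map (Sum.elim g ε (Sum.inl i))),
        ∀ s, x s = 1 ∨ x s = -1 := by
      rw [MeasureTheory.ae_all_iff]
      intro s
      rw [ae_iff]
      have hbad : {x : Fin n → ℝ | ¬(x s = 1 ∨ x s = -1)}
          = Set.univ.pi (fun t => if t = s then {u : ℝ | ¬(u = 1 ∨ u = -1)} else Set.univ) := by
        ext x
        simp only [Set.mem_setOf_eq, Set.mem_pi, Set.mem_univ, true_implies]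
        constructor
        · intro h t
          by_cases ht : t = s
          · subst ht; simpa using h
          · simp [ht]
        · intro h
          have := h s
          simpa using this
      rw [hbad, Measure.pi_pi]
      refine Finset.prod_eq_zero (Finset.mem_univ s) ?_
      simpa using hgae s
    have hpt : ∀ ω, vecNorm ((A * Matrix.diagonal (fun i => g i ω) * B).mulVec
        (fun i => ε i ω)) ^ 4 = phi A B (Z ω) := fun ω => phi_pt A B (Z ω)
    have hC0 : (0:ℝ) ≤ c₀ ^ 2 * (k:ℝ) ^ 2 + (2 + m₄) * c₀ ^ 2 * (k:ℝ) := by positivity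
    have hlin : ∫⁻ ω, ENNReal.ofReal (phi A B (Z ω)) ∂μ
        ≤ ENNReal.ofReal (c₀ ^ 2 * (k:ℝ) ^ 2 + (2 + m₄) * c₀ ^ 2 * (k:ℝ)) := by
      have h1 : ∫⁻ ω, ENNReal.ofReal (phi A B (Z ω)) ∂μ
          = ∫⁻ z, ENNReal.ofReal (phi A B z) ∂(μ.map Z) :=
        (lintegral_map (ENNReal.measurable_ofReal.comp (phi_meas A B)) hZ).symm
      rw [h1, hmap]
      have h2 := measurePreserving_sumPiEquivProdPi_symm (X := fun _ : Fin n ⊕ Fin n => ℝ)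
        (fun s => μ.map (Sum.elim g ε s))
      have h3 : ∫⁻ z, ENNReal.ofReal (phi A B z)
            ∂(Measure.pi (fun s => μ.map (Sum.elim g ε s)))
          = ∫⁻ p, ENNReal.ofReal
              (phi A B ((MeasurableEquiv.sumPiEquivProdPi (fun _ : Fin n ⊕ Fin n => ℝ)).symm p))
            ∂((Measure.pi fun i : Fin n => μ.map (Sum.elim g ε (Sum.inl i))).prod
                (Measure.pi fun i : Fin n => μ.map (Sum.elim g ε (Sum.inr i)))) :=
        (h2.lintegral_comp (ENNReal.measurable_ofReal.comp (phi_meas A B))).symm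
      have hfm : AEMeasurable (fun p : (Fin n → ℝ) × (Fin n → ℝ) => ENNReal.ofReal
          (phi A B ((MeasurableEquiv.sumPiEquivProdPi (fun _ : Fin n ⊕ Fin n => ℝ)).symm p)))
          (((Measure.pi fun i : Fin n => μ.map (Sum.elim g ε (Sum.inl i))).prod
            (Measure.pi fun i : Fin n => μ.map (Sum.elim g ε (Sum.inr i))))) := by
        refine Measurable.aemeasurable ?_
        exact ENNReal.measurable_ofReal.comp
          ((phi_meas A B).comp (MeasurableEquiv.measurable _))
      rw [h3, lintegral_prod _ hfm]
      exact core_bound A hAsymm hAidem hArank B c₀ hc₀ hB _ _ hε1 hε2 hε4int m₄ hm₄0 hε4 hae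
    simp only [hpt]
    rw [integral_eq_lintegral_of_nonneg_ae
      (Filter.Eventually.of_forall fun ω => phi_nonneg A B (Z ω))
      (((phi_meas A B).comp hZ).aestronglyMeasurable)]
    have h := ENNReal.toReal_mono ENNReal.ofReal_ne_top hlin
    rwa [ENNReal.toReal_ofReal hC0] at h
end

section
/- Let ε be symmetric errors (gε distributed as ε for all diagonal sign-flip matrices g), t a measurable statistic, and G_1,…,G_R i.i.d. uniform over the group of n×n diagonal ±1 matrices, independent of ε. Define pval = (1/(R+1))·(1 + ∑_{r=1}^R 1{t(G_r ε) ≥ t(ε)}). Then P(pval ≤ α) ≤ α for every α ∈ (0,1]. -/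
open MeasureTheory ProbabilityTheory

namespace MCSF

variable {n : ℕ}

/-- coordinatewise sign flip -/
def sgn (v : Fin n → Bool) (x : Fin n → ℝ) : Fin n → ℝ := fun i => (if v i then (1:ℝ) else -1) * x i

lemma measurable_sgn (v : Fin n → Bool) : Measurable (sgn v) :=
  measurable_pi_lambda _ fun i => ((measurable_pi_apply i).const_mul _)

/-- group operation matching composition of sign flips -/
def bop (v g : Fin n → Bool) : Fin n → Bool := fun i => v i == g i

lemma sgn_one (x : Fin n → ℝ) : sgn (fun _ => true) x = x := by
  funext i; simp [sgn]

lemma sgn_sgn (v g : Fin n → Bool) (x : Fin n → ℝ) : sgn v (sgn g x) = sgn (bop v g) x := by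
  funext i
  simp only [sgn, bop]
  rcases Bool.eq_false_or_eq_true (v i) with h|h <;> rcases Bool.eq_false_or_eq_true (g i) with h'|h' <;>
    simp [h, h'] <;> ring

lemma bop_bop (a g : Fin n → Bool) : bop (bop a g) g = a := by
  funext i
  simp only [bop]
  cases a i <;> cases g i <;> rfl

lemma bop_one (g : Fin n → Bool) : bop (fun _ => true) g = g := by
  funext i; simp only [bop]; cases g i <;> rfl

variable {m : ℕ} (t : (Fin n → ℝ) → ℝ)

/-- number of indices `j` with `t (sgn (u j) x) ≥ t (sgn (u i) x)` -/
noncomputable def cnt (u : Fin m → Fin n → Bool) (i : Fin m) (x : Fin n → ℝ) : ℕ :=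
  ∑ j : Fin m, if t (sgn (u i) x) ≤ t (sgn (u j) x) then 1 else 0

noncomputable def Aset (k : ℕ) (u : Fin m → Fin n → Bool) (i : Fin m) : Set (Fin n → ℝ) :=
  {x | cnt t u i x ≤ k}

lemma measurable_cnt (ht : Measurable t) (u : Fin m → Fin n → Bool) (i : Fin m) :
    Measurable (cnt t u i) := by
  apply Finset.measurable_sum
  intro j _
  exact Measurable.ite
    (measurableSet_le (ht.comp (measurable_sgn _)) (ht.comp (measurable_sgn _)))
    measurable_const measurable_const

lemma measurableSet_Aset (ht : Measurable t) (k : ℕ) (u : Fin m → Fin n → Bool) (i : Fin m) :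
    MeasurableSet (Aset t k u i) :=
  measurable_cnt t ht u i measurableSet_Iic

lemma cnt_sgn (u : Fin m → Fin n → Bool) (i : Fin m) (g : Fin n → Bool) (x : Fin n → ℝ) :
    cnt t u i (sgn g x) = cnt t (fun j => bop (u j) g) i x := by
  unfold cnt
  simp only [sgn_sgn]

lemma cnt_comp (e : Fin m ≃ Fin m) (u : Fin m → Fin n → Bool) (i : Fin m) (x : Fin n → ℝ) :
    cnt t (u ∘ e) i x = cnt t u (e i) x := by
  unfold cnt
  rw [← Equiv.sum_comp e (fun j => if t (sgn (u (e i)) x) ≤ t (sgn (u j) x) then 1 else 0)]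
  rfl

lemma cnt_cons_one {R : ℕ} (v : Fin R → Fin n → Bool) (x : Fin n → ℝ) :
    cnt t (Fin.cons (fun _ => true) v) 0 x
      = 1 + ∑ r : Fin R, if t x ≤ t (sgn (v r) x) then 1 else 0 := by
  unfold cnt
  rw [Fin.sum_univ_succ]
  simp [sgn_one]

/-- deterministic rank bound: at most `k` indices have at most `k` values above them -/
lemma det_bound (u : Fin m → Fin n → Bool) (x : Fin n → ℝ) (k : ℕ) :
    (Finset.univ.filter fun i => cnt t u i x ≤ k).card ≤ k := by
  classical
  set T : Fin m → ℝ := fun j => t (sgn (u j) x) with hT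
  have hcnt : ∀ i, cnt t u i x = (Finset.univ.filter fun j => T i ≤ T j).card := by
    intro i; rw [Finset.card_filter]; rfl
  set S := Finset.univ.filter fun i => cnt t u i x ≤ k with hS
  rcases S.eq_empty_or_nonempty with h | h
  · simp [h]
  · obtain ⟨i₀, hi₀S, hmin⟩ := S.exists_min_image T h
    have hsub : S ⊆ Finset.univ.filter fun j => T i₀ ≤ T j := by
      intro i hi
      simp only [Finset.mem_filter, Finset.mem_univ, true_and]
      exact hmin i hi
    have h1 := Finset.card_le_card hsub
    have h2 : cnt t u i₀ x ≤ k := (Finset.mem_filter.mp hi₀S).2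
    rw [hcnt i₀] at h2
    omega


/-- reindexing bijection `(g, v) ↦ (g, v₁·g, …, v_R·g)` -/
def consBop {n R : ℕ} : ((Fin n → Bool) × (Fin R → Fin n → Bool)) ≃ (Fin (R+1) → Fin n → Bool) where
  toFun p := Fin.cons p.1 (fun r => bop (p.2 r) p.1)
  invFun u := (u 0, fun r => bop (u r.succ) (u 0))
  left_inv p := by
    ext1
    · simp
    · funext r
      simp [bop_bop]
  right_inv u := by
    funext j
    refine Fin.cases ?_ ?_ j
    · simp
    · intro r
      simp [bop_bop]

lemma sum_indicator_le (ht : Measurable t) (u : Fin m → Fin n → Bool) (k : ℕ) (x : Fin n → ℝ) :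
    ∑ i : Fin m, (Aset t k u i).indicator (1 : (Fin n → ℝ) → ENNReal) x ≤ (k : ENNReal) := by
  classical
  have h1 : ∑ i : Fin m, (Aset t k u i).indicator (1 : (Fin n → ℝ) → ENNReal) x
      = ((Finset.univ.filter fun i => cnt t u i x ≤ k).card : ENNReal) := by
    rw [Finset.card_filter]
    push_cast
    apply Finset.sum_congr rfl
    intro i _
    simp [Set.indicator_apply, Aset, apply_ite]
  rw [h1]
  exact_mod_cast Nat.cast_le.mpr (det_bound t u x k)

end MCSF


open MCSF in
/-- Finite-sample validity of the Monte Carlo sign-flip randomization test: if `ε` is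
sign-symmetric, `G₁, …, G_R` are i.i.d. uniform sign-flip matrices independent of `ε`
(encoded by i.i.d. uniform random sign patterns `b r : Ω → (Fin n → Bool)`), and
`pval = (1/(R+1)) (1 + ∑_r 1{t(G_r ε) ≥ t(ε)})`, then `P(pval ≤ α) ≤ α` for `α ∈ (0, 1]`. -/
theorem monte_carlo_signflip_test_valid
    {Ω : Type*} [MeasurableSpace Ω] (μ : Measure Ω) [IsProbabilityMeasure μ]
    {n R : ℕ} (ε : Ω → Fin n → ℝ) (hεmeas : Measurable ε)
    (hsym : ∀ v : Fin n → Bool,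
      Measure.map (fun ω => fun i => (if v i then (1 : ℝ) else -1) * ε ω i) μ
        = Measure.map ε μ)
    (b : Fin R → Ω → (Fin n → Bool)) (hbmeas : ∀ r, Measurable (b r))
    (hbiid : iIndepFun b μ)
    (hblaw : ∀ r, Measure.map (b r) μ = (PMF.uniformOfFintype (Fin n → Bool)).toMeasure)
    (hbε : IndepFun (fun ω => fun r => b r ω) ε μ)
    (t : (Fin n → ℝ) → ℝ) (ht : Measurable t)
    (pval : Ω → ℝ)
    (hpval : ∀ ω, pval ω = (R + 1 : ℝ)⁻¹ * (1 +
        ∑ r : Fin R,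
          if t (ε ω) ≤ t (fun i => (if b r ω i then (1 : ℝ) else -1) * ε ω i)
          then (1 : ℝ) else 0))
    (α : ℝ) (hα₀ : 0 < α) (hα₁ : α ≤ 1) :
    μ {ω | pval ω ≤ α} ≤ ENNReal.ofReal α := by
  classical
  set k : ℕ := ⌊α * ((R : ℝ) + 1)⌋₊ with hk
  set one : Fin n → Bool := fun _ => true with hone
  set ν : Measure (Fin n → ℝ) := Measure.map ε μ with hν
  have hνprob : IsProbabilityMeasure ν := Measure.isProbabilityMeasure_map hεmeas.aemeasurable
  set bb : Ω → (Fin R → Fin n → Bool) := fun ω r => b r ω with hbb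
  have hbbmeas : Measurable bb := measurable_pi_lambda _ hbmeas
  have hpos : (0 : ℝ) < (R : ℝ) + 1 := by positivity
  -- Step A : rewrite the event using the natural-number count
  have hA : {ω | pval ω ≤ α}
      = {ω | cnt t (Fin.cons one (bb ω)) 0 (ε ω) ≤ k} := by
    ext ω
    simp only [Set.mem_setOf_eq, hpval ω, hone, cnt_cons_one]
    have hcast : (1 : ℝ) + ∑ r : Fin R,
        (if t (ε ω) ≤ t (fun i => (if b r ω i then (1 : ℝ) else -1) * ε ω i) then (1:ℝ) else 0)
        = ((1 + ∑ r : Fin R,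
            if t (ε ω) ≤ t (sgn (b r ω) (ε ω)) then 1 else 0 : ℕ) : ℝ) := by
      push_cast [apply_ite (Nat.cast : ℕ → ℝ)]
      rfl
    rw [inv_mul_le_iff₀ hpos, hcast, hk, Nat.le_floor_iff (by positivity), mul_comm α]
  rw [hA]
  -- measurability of the Aset sets
  have hAm : ∀ (u : Fin (R+1) → Fin n → Bool) (i : Fin (R+1)),
      MeasurableSet (Aset t k u i) := fun u i => measurableSet_Aset t ht k u i
  -- Step B : decompose over the value of bb and use independence
  have hdecomp : μ {ω | cnt t (Fin.cons one (bb ω)) 0 (ε ω) ≤ k}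
      = ∑ v : Fin R → Fin n → Bool,
          μ (bb ⁻¹' {v}) * ν (Aset t k (Fin.cons one v) 0) := by
    have hEq : {ω | cnt t (Fin.cons one (bb ω)) 0 (ε ω) ≤ k}
        = ⋃ v : Fin R → Fin n → Bool,
            bb ⁻¹' {v} ∩ ε ⁻¹' (Aset t k (Fin.cons one v) 0) := by
      ext ω
      simp only [Set.mem_setOf_eq, Set.mem_iUnion, Set.mem_inter_iff, Set.mem_preimage,
        Set.mem_singleton_iff, Aset]
      exact ⟨fun h => ⟨bb ω, rfl, h⟩, fun ⟨v, h1, h2⟩ => h1 ▸ h2⟩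
    rw [hEq, measure_iUnion ?_ ?_, tsum_fintype]
    · refine Finset.sum_congr rfl fun v _ => ?_
      have := hbε.measure_inter_preimage_eq_mul {v} (Aset t k (Fin.cons one v) 0)
        (measurableSet_singleton v) (hAm _ _)
      rw [this, hν, Measure.map_apply hεmeas (hAm _ _)]
    · intro v w hvw
      apply Set.disjoint_left.mpr
      rintro ω ⟨h1, _⟩ ⟨h2, _⟩
      exact hvw (h1.symm.trans h2)
    · intro v
      exact (hbbmeas (measurableSet_singleton v)).inter (hεmeas (hAm _ _))
  -- the law of bb is uniform : each atom has mass C^R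
  set C : ENNReal := ((Fintype.card (Fin n → Bool) : ℕ) : ENNReal)⁻¹ with hC
  have hatom : ∀ v : Fin R → Fin n → Bool, μ (bb ⁻¹' {v}) = C ^ R := by
    intro v
    have h1 : bb ⁻¹' {v} = ⋂ r ∈ Finset.univ, b r ⁻¹' {v r} := by
      ext ω
      simp [funext_iff, hbb]
    rw [h1, hbiid.measure_inter_preimage_eq_mul Finset.univ
      (sets := fun r => {v r}) (fun r _ => measurableSet_singleton (v r))]
    have h2 : ∀ r : Fin R, μ (b r ⁻¹' {v r}) = C := by
      intro r
      rw [← Measure.map_apply (hbmeas r) (measurableSet_singleton _), hblaw r,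
        PMF.toMeasure_apply_singleton _ _ (measurableSet_singleton _),
        PMF.uniformOfFintype_apply]
    simp [h2]
  -- invariance of ν under sign flips
  have hinv : ∀ (g : Fin n → Bool) (S : Set (Fin n → ℝ)), MeasurableSet S →
      ν S = ν (sgn g ⁻¹' S) := by
    intro g S hS
    have h1 : Measure.map (sgn g) ν = ν := by
      rw [hν, Measure.map_map (measurable_sgn g) hεmeas]
      exact hsym g
    conv_lhs => rw [← h1]
    exact Measure.map_apply (measurable_sgn g) hS
  -- preimage of Aset under a sign flip
  have hpre : ∀ (g : Fin n → Bool) (u : Fin (R+1) → Fin n → Bool) (i : Fin (R+1)),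
      sgn g ⁻¹' Aset t k u i = Aset t k (fun j => bop (u j) g) i := by
    intro g u i
    ext x
    simp only [Set.mem_preimage, Aset, Set.mem_setOf_eq, cnt_sgn]
  -- main sums
  set S0 : ENNReal := ∑ u : Fin (R+1) → Fin n → Bool, ν (Aset t k u 0) with hS0
  set Sv : ENNReal := ∑ v : Fin R → Fin n → Bool, ν (Aset t k (Fin.cons one v) 0) with hSv
  -- step D : card * Sv = S0
  have hD : ((Fintype.card (Fin n → Bool) : ℕ) : ENNReal) * Sv = S0 := by
    have h1 : ∀ v : Fin R → Fin n → Bool,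
        ∑ g : Fin n → Bool, ν (Aset t k (consBop (g, v)) 0)
          = ((Fintype.card (Fin n → Bool) : ℕ) : ENNReal)
              * ν (Aset t k (Fin.cons one v) 0) := by
      intro v
      have h2 : ∀ g : Fin n → Bool,
          ν (Aset t k (consBop (g, v)) 0) = ν (Aset t k (Fin.cons one v) 0) := by
        intro g
        have hu : (fun j : Fin (R+1) => bop ((Fin.cons one v : Fin (R+1) → Fin n → Bool) j) g) = consBop (g, v) := by
          funext j
          refine Fin.cases ?_ (fun r => ?_) j
          · simp [consBop, hone, bop_one]
          · simp [consBop]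
        rw [hinv g _ (hAm (Fin.cons one v) 0), hpre, hu]
      simp [h2, Finset.sum_const, Finset.card_univ, mul_comm]
    calc ((Fintype.card (Fin n → Bool) : ℕ) : ENNReal) * Sv
        = ∑ v : Fin R → Fin n → Bool, ∑ g : Fin n → Bool,
            ν (Aset t k (consBop (g, v)) 0) := by
          rw [hSv, Finset.mul_sum]
          exact Finset.sum_congr rfl fun v _ => (h1 v).symm
      _ = ∑ p : (Fin n → Bool) × (Fin R → Fin n → Bool),
            ν (Aset t k (consBop p) 0) := by
          rw [Fintype.sum_prod_type]
          exact Finset.sum_comm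
      _ = S0 := Equiv.sum_comp consBop (fun u => ν (Aset t k u 0))
  -- step E : swap symmetry
  have hAcomp : ∀ (e : Fin (R+1) ≃ Fin (R+1)) (u : Fin (R+1) → Fin n → Bool) (i : Fin (R+1)),
      Aset t k (u ∘ e) i = Aset t k u (e i) := by
    intro e u i
    ext x
    simp only [Aset, Set.mem_setOf_eq, cnt_comp]
  have hswap : ∀ i : Fin (R+1), (∑ u : Fin (R+1) → Fin n → Bool, ν (Aset t k u i)) = S0 := by
    intro i
    set e : (Fin (R+1) → Fin n → Bool) ≃ (Fin (R+1) → Fin n → Bool) :=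
      Equiv.arrowCongr (Equiv.swap (0 : Fin (R+1)) i).symm (Equiv.refl _) with he
    have h1 : ∀ u, ν (Aset t k (e u) 0) = ν (Aset t k u i) := by
      intro u
      have h2 : e u = u ∘ (Equiv.swap (0 : Fin (R+1)) i) := by
        funext j
        simp [he, Equiv.arrowCongr_apply, Equiv.symm_symm]
      rw [h2, hAcomp, Equiv.swap_apply_left]
    rw [hS0, ← Equiv.sum_comp e (fun u => ν (Aset t k u 0))]
    exact (Finset.sum_congr rfl fun u _ => h1 u).symm
  -- bound : for each u, the sum over i is at most k
  have hbound : ∀ u : Fin (R+1) → Fin n → Bool,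
      (∑ i : Fin (R+1), ν (Aset t k u i)) ≤ (k : ENNReal) := by
    intro u
    calc (∑ i : Fin (R+1), ν (Aset t k u i))
        = ∫⁻ x, ∑ i : Fin (R+1), (Aset t k u i).indicator 1 x ∂ν := by
          rw [lintegral_finset_sum _ (fun i _ => measurable_one.indicator (hAm u i))]
          exact Finset.sum_congr rfl fun i _ => (lintegral_indicator_one (hAm u i)).symm
      _ ≤ ∫⁻ _, (k : ENNReal) ∂ν := lintegral_mono fun x => sum_indicator_le t ht u k x
      _ = k := by simp
  -- combine : (R+1) * S0 ≤ cardU * k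
  have hRS : ((R : ENNReal) + 1) * S0
      ≤ ((Fintype.card (Fin n → Bool) : ℕ) : ENNReal) ^ (R + 1) * k := by
    have h1 : ((R : ENNReal) + 1) * S0 = ∑ i : Fin (R+1),
        ∑ u : Fin (R+1) → Fin n → Bool, ν (Aset t k u i) := by
      simp only [hswap, Finset.sum_const, Finset.card_univ, Fintype.card_fin, nsmul_eq_mul]
      push_cast
      ring
    rw [h1, Finset.sum_comm]
    calc (∑ u : Fin (R+1) → Fin n → Bool, ∑ i : Fin (R+1), ν (Aset t k u i))
        ≤ ∑ _u : Fin (R+1) → Fin n → Bool, (k : ENNReal) :=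
          Finset.sum_le_sum fun u _ => hbound u
      _ = ((Fintype.card (Fin n → Bool) : ℕ) : ENNReal) ^ (R + 1) * k := by
          rw [Finset.sum_const, Finset.card_univ, nsmul_eq_mul]
          congr 1
          rw [Fintype.card_fun]
          push_cast
          simp
  -- put everything together
  have hcard0 : ((Fintype.card (Fin n → Bool) : ℕ) : ENNReal) ≠ 0 := by
    simp [Fintype.card_ne_zero]
  have hcardtop : ((Fintype.card (Fin n → Bool) : ℕ) : ENNReal) ≠ ⊤ := by
    simp
  have hμE : μ {ω | cnt t (Fin.cons one (bb ω)) 0 (ε ω) ≤ k} = C ^ R * Sv := by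
    rw [hdecomp]
    simp only [hatom]
    rw [← Finset.mul_sum, hSv]
  have hfinal : μ {ω | cnt t (Fin.cons one (bb ω)) 0 (ε ω) ≤ k}
      * (((Fintype.card (Fin n → Bool) : ℕ) : ENNReal) ^ (R + 1) * ((R : ENNReal) + 1))
      ≤ ((Fintype.card (Fin n → Bool) : ℕ) : ENNReal) ^ (R + 1) * ((R : ENNReal) + 1)
        * ENNReal.ofReal α := by
    have hkα : (k : ENNReal) ≤ ENNReal.ofReal α * ((R : ENNReal) + 1) := by
      have h1 : (k : ℝ) ≤ α * ((R : ℝ) + 1) := by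
        rw [hk]
        exact Nat.floor_le (by positivity)
      calc (k : ENNReal) = ENNReal.ofReal (k : ℝ) := by
            rw [ENNReal.ofReal_natCast]
        _ ≤ ENNReal.ofReal (α * ((R : ℝ) + 1)) := ENNReal.ofReal_le_ofReal h1
        _ = ENNReal.ofReal α * ENNReal.ofReal ((R : ℝ) + 1) :=
            ENNReal.ofReal_mul hα₀.le
        _ = ENNReal.ofReal α * ((R : ENNReal) + 1) := by
            congr 1
            rw [show ((R : ℝ) + 1) = ((R + 1 : ℕ) : ℝ) by push_cast; ring,
              ENNReal.ofReal_natCast]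
            push_cast
            ring
    have hCcard : C * ((Fintype.card (Fin n → Bool) : ℕ) : ENNReal) = 1 :=
      ENNReal.inv_mul_cancel hcard0 hcardtop
    calc μ {ω | cnt t (Fin.cons one (bb ω)) 0 (ε ω) ≤ k}
        * (((Fintype.card (Fin n → Bool) : ℕ) : ENNReal) ^ (R + 1) * ((R : ENNReal) + 1))
        = (C * ((Fintype.card (Fin n → Bool) : ℕ) : ENNReal)) ^ R
            * ((((Fintype.card (Fin n → Bool) : ℕ) : ENNReal)) * Sv
              * ((R : ENNReal) + 1)) := by
          rw [hμE, mul_pow, pow_succ]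
          ring
      _ = ((R : ENNReal) + 1) * S0 := by
          rw [hCcard, hD, one_pow, one_mul]
          ring
      _ ≤ ((Fintype.card (Fin n → Bool) : ℕ) : ENNReal) ^ (R + 1) * (k : ENNReal) := hRS
      _ ≤ ((Fintype.card (Fin n → Bool) : ℕ) : ENNReal) ^ (R + 1)
            * (ENNReal.ofReal α * ((R : ENNReal) + 1)) :=
          mul_le_mul_right hkα _
      _ = ((Fintype.card (Fin n → Bool) : ℕ) : ENNReal) ^ (R + 1) * ((R : ENNReal) + 1)
            * ENNReal.ofReal α := by ring
  have hX0 : (((Fintype.card (Fin n → Bool) : ℕ) : ENNReal) ^ (R + 1)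
      * ((R : ENNReal) + 1)) ≠ 0 :=
    mul_ne_zero (pow_ne_zero _ hcard0) (by simp)
  have hXtop : (((Fintype.card (Fin n → Bool) : ℕ) : ENNReal) ^ (R + 1)
      * ((R : ENNReal) + 1)) ≠ ⊤ :=
    ENNReal.mul_ne_top (ENNReal.pow_ne_top hcardtop) (by simp)
  have hmain : μ {ω | cnt t (Fin.cons one (bb ω)) 0 (ε ω) ≤ k}
      * (((Fintype.card (Fin n → Bool) : ℕ) : ENNReal) ^ (R + 1) * ((R : ENNReal) + 1))
      ≤ ENNReal.ofReal α
        * (((Fintype.card (Fin n → Bool) : ℕ) : ENNReal) ^ (R + 1)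
          * ((R : ENNReal) + 1)) := by
    calc μ {ω | cnt t (Fin.cons one (bb ω)) 0 (ε ω) ≤ k}
        * (((Fintype.card (Fin n → Bool) : ℕ) : ENNReal) ^ (R + 1) * ((R : ENNReal) + 1))
        ≤ ((Fintype.card (Fin n → Bool) : ℕ) : ENNReal) ^ (R + 1) * ((R : ENNReal) + 1)
          * ENNReal.ofReal α := hfinal
      _ = ENNReal.ofReal α
          * (((Fintype.card (Fin n → Bool) : ℕ) : ENNReal) ^ (R + 1)
            * ((R : ENNReal) + 1)) := by ring
  exact (ENNReal.mul_le_mul_iff_left hX0 hXtop).mp hmain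
end
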